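/- For every l ∈ ℕ, every i ∈ T with |i| ≤ l, and every u ∈ ℝ^d with |u| = 1, almost surely |⟨u,Y_l⟩| ≥ |⟨Π_i^* u, [Y_{l−|i|}]_i⟩| − ∑_{k=1}^{|i|} ‖Π_{i|_{k−1}}‖·|Z_{l,i|_k}|. -/

import Mathlib

open MeasureTheory ProbabilityTheory Filter Matrix RealInnerProductSpace

noncomputable section

/-- Vectors in `ℝ^d` with the Euclidean norm. -/
abbrev Vec (d : ℕ) := EuclideanSpace ℝ (Fin d)

/-- `d × d` real matrices. -/
abbrev Mat (d : ℕ) := Matrix (Fin d) (Fin d) ℝ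

variable {d : ℕ}

instance matMeasurableSpace : MeasurableSpace (Mat d) :=
  (inferInstance : MeasurableSpace (Fin d → Fin d → ℝ))

instance matMeasureSpace : MeasureSpace (Mat d) :=
  (inferInstance : MeasureSpace (Fin d → Fin d → ℝ))

/-- Action of a matrix on a Euclidean vector. -/
def mv (a : Mat d) (x : Vec d) : Vec d := Matrix.toEuclideanLin a x

/-- Operator norm of a matrix acting on Euclidean space. -/
def opNorm (a : Mat d) : ℝ := ‖Matrix.toEuclideanCLM (𝕜 := ℝ) a‖

/-- Product of the edge weights along the path from node `j` to node `j ++ i`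
in the Ulam–Harris tree, where `An j' i'` is the weight of the edge from `j'`
to its `i'`-th child. -/
def pathProdFrom {Ω : Type} (An : List ℕ → ℕ → Ω → Mat d) (j : List ℕ) (i : List ℕ)
    (ω : Ω) : Mat d :=
  (List.ofFn (fun k : Fin i.length => An (j ++ i.take (k : ℕ)) (i.get k) ω)).prod

/-- Product of the edge weights from the root to node `i` (denoted `Π_i`). -/
def pathProd {Ω : Type} (An : List ℕ → ℕ → Ω → Mat d) (i : List ℕ) (ω : Ω) : Mat d :=
  pathProdFrom An ([]) i ω

/-- The spine `(1,1,…,1)` of length `n`. -/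
def spine (n : ℕ) : List ℕ := List.replicate n 1

/-- Longest common prefix of two nodes (denoted `i ∧ i'` in the paper). -/
def lcp : List ℕ → List ℕ → List ℕ
  | a :: as, b :: bs => if a = b then a :: lcp as bs else ([])
  | _, _ => ([])

/-- Membership of a node in the (random) tree `T` determined by the offspring
numbers `Nn`. -/
def memT {Ω : Type} (Nn : List ℕ → Ω → ℕ) (ω : Ω) (i : List ℕ) : Prop :=
  ∀ k : Fin i.length, 1 ≤ i.get k ∧ i.get k ≤ Nn (i.take (k : ℕ)) ω

/-- Codomain of the random data attached to a node: `inl j` carries the copy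
`(Q_j, (A_{ji})_i)` and `inr j` carries the copy `X_j`. -/
def copyType (d : ℕ) : List ℕ ⊕ List ℕ → Type
  | Sum.inl _ => Vec d × (ℕ → Mat d)
  | Sum.inr _ => Vec d

instance copyTypeMS (d : ℕ) : ∀ t, MeasurableSpace (copyType d t) := fun t => by
  cases t with
  | inl _ => exact (inferInstance : MeasurableSpace (Vec d × (ℕ → Mat d)))
  | inr _ => exact (inferInstance : MeasurableSpace (Vec d))

/-- The family of node data, bundled as a single family of random variables. -/
def nodeFun {Ω : Type} (Qn : List ℕ → Ω → Vec d) (An : List ℕ → ℕ → Ω → Mat d)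
    (Xn : List ℕ → Ω → Vec d) : ∀ t : List ℕ ⊕ List ℕ, Ω → copyType d t
  | Sum.inl j => fun ω => (Qn j ω, fun i => An j i ω)
  | Sum.inr j => Xn j

/-- The full setting for the multivariate smoothing transform: a probability space
carrying the random element `(Q, (A_i)_{i ≥ 1})` (with `A_0 := 0` by convention,
since indices start at `1`), i.i.d. copies `(Q_j, (A_{ji})_i)` of it and i.i.d.
copies `X_j` of a random vector `X` attached to the nodes `j` of the Ulam–Harris
tree, together with the function `k(s) = lim_n (E‖M_n ⋯ M_1‖^s)^{1/n}`, where the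
`M_i` are i.i.d. with the law `μ` of `A_1^*`. -/
structure Setup (d : ℕ) (Ω : Type) [MeasurableSpace Ω] where
  P : Measure Ω
  probP : IsProbabilityMeasure P
  Qn : List ℕ → Ω → Vec d
  An : List ℕ → ℕ → Ω → Mat d
  Xn : List ℕ → Ω → Vec d
  X : Ω → Vec d
  Nn : List ℕ → Ω → ℕ
  kFun : ℝ → ℝ
  measQn : ∀ j, Measurable (Qn j)
  measAn : ∀ j i, Measurable (An j i)
  measXn : ∀ j, Measurable (Xn j)
  measX : Measurable X
  measNn : ∀ j, Measurable (Nn j)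
  hA0 : ∀ j ω, An j 0 ω = 0
  hNmax : ∀ j ω i, Nn j ω < i → An j i ω = 0
  hNattain : ∀ j ω, Nn j ω ≠ 0 → An j (Nn j ω) ω ≠ 0
  indepCopies : iIndepFun (m := copyTypeMS d) (nodeFun Qn An Xn) P
  lawQA : ∀ j, P.map (fun ω => (Qn j ω, fun i => An j i ω))
      = P.map (fun ω => (Qn ([]) ω, fun i => An ([]) i ω))
  lawXn : ∀ j, P.map (Xn j) = P.map X
  hkFun : ∀ s : ℝ, 0 ≤ s →
    Integrable (fun ω => opNorm (An ([]) 1 ω) ^ s) P →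
    Tendsto (fun n : ℕ => (∫ ω, opNorm (pathProd An (spine n) ω) ^ s ∂P) ^ ((n : ℝ)⁻¹))
      atTop (nhds (kFun s))

attribute [instance] Setup.probP

namespace Setup

variable {Ω : Type} [MeasurableSpace Ω] (S : Setup d Ω)

/-- The law `μ` of `A_1^*`. -/
def muA : Measure (Mat d) := S.P.map (fun ω => (S.An ([]) 1 ω)ᵀ)

/-- `E[N]`. -/
def EN : ℝ := ∫ ω, (S.Nn ([]) ω : ℝ) ∂S.P

/-- `m(s) := E[N] · k(s)`. -/
def mFun (s : ℝ) : ℝ := S.EN * S.kFun s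

/-- `Π_n^* = M_n ⋯ M_1`, realized as the transpose of the weight product along
the spine of the tree (so that the `M_i` are i.i.d. with law `μ`). -/
def PiStar (n : ℕ) (ω : Ω) : Mat d := (pathProd S.An (spine n) ω)ᵀ

end Setup

namespace Setup

variable {d : ℕ} {Ω : Type} [MeasurableSpace Ω] (S : Setup d Ω)

/-- `Y_m` built from the data of the subtree rooted at `j` (denoted `[Y_m]_j`). -/
def Ysub (j : List ℕ) (m : ℕ) (ω : Ω) : Vec d :=
  (∑' i : List ℕ, if i.length < m then mv (pathProdFrom S.An j i ω) (S.Qn (j ++ i) ω) else 0)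
    + (∑' i : List ℕ, if i.length = m then mv (pathProdFrom S.An j i ω) (S.Xn (j ++ i) ω) else 0)

/-- The weighted branching process `Y_l` associated with `(Q, (A_i))` and `X`. -/
def Y (l : ℕ) (ω : Ω) : Vec d := S.Ysub ([]) l ω

/-- `Z_{l,jc} = ∑_{j' ≤ N_j, j' ≠ c} A_{jj'} [Y_{l-|j|-1}]_{jj'} + Q_j`. -/
def Zwbp (l : ℕ) (j : List ℕ) (c : ℕ) (ω : Ω) : Vec d :=
  (∑ j' ∈ (Finset.Icc 1 (S.Nn j ω)).erase c,
      mv (S.An j j' ω) (S.Ysub (j ++ [j']) (l - j.length - 1) ω))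
    + S.Qn j ω

/-- `Z` at node `j` with excluded child `c`:
`∑_{j' ≤ N_j, j' ≠ c} A_{jj'} X_{jj'} + Q_j`. -/
def Zx (j : List ℕ) (c : ℕ) (ω : Ω) : Vec d :=
  (∑ j' ∈ (Finset.Icc 1 (S.Nn j ω)).erase c, mv (S.An j j' ω) (S.Xn (j ++ [j']) ω))
    + S.Qn j ω

/-- The event `V_{i,t}` (for direction `u` and constants `C0`, `δ`). -/
def Vset (u : Vec d) (C0 δ t : ℝ) (i : List ℕ) : Set Ω :=
  {ω | t ≤ ‖mv ((pathProd S.An i ω)ᵀ) u‖ ∧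
    ∀ k : Fin i.length,
      opNorm ((pathProd S.An (i.take (k : ℕ)) ω)ᵀ) * max ‖S.Zx (i.take (k : ℕ)) (i.get k) ω‖ 1
        ≤ Real.exp (-(((i.length : ℝ) - (k : ℕ)) * δ)) * (C0 * t)}

/-- The event `W_{i,i',t}` (for direction `u` and constants `C0`, `δ`). -/
def Wset (u : Vec d) (C0 δ t : ℝ) (i i' : List ℕ) : Set Ω :=
  {ω | t < ‖mv ((pathProd S.An i ω)ᵀ) u‖ ∧ t < ‖mv ((pathProd S.An i' ω)ᵀ) u‖ ∧
    opNorm (pathProd S.An (lcp i i') ω)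
      ≤ C0 * t * Real.exp (-δ * ((i.length : ℝ) - (lcp i i').length))}

/-- The event `V_{n,t}` built from the i.i.d. sequence `(M_n, Z_n)`, where
`M_n` is the transpose of the `n`-th spine weight and `Z_n` the corresponding
`Z`-variable (excluding the spine child `1`). -/
def Vnt (u : Vec d) (C0 δ t : ℝ) (n : ℕ) : Set Ω :=
  {ω | t ≤ ‖mv (S.PiStar n ω) u‖ ∧
    ∀ k : ℕ, k < n →
      opNorm (S.PiStar k ω) * max ‖S.Zx (spine k) 1 ω‖ 1
        ≤ Real.exp (-(((n : ℝ) - k) * δ)) * (C0 * t)}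

/-- The σ-algebra generated by the shape of the tree, i.e. by the offspring
numbers `(N_j)_j`. -/
def treeSigma : MeasurableSpace Ω :=
  ⨆ j : List ℕ, MeasurableSpace.comap (S.Nn j) (inferInstance : MeasurableSpace ℕ)

end Setup

/-- `n_t := ⌈log t / ρ⌉`. -/
def ntOf (ρ t : ℝ) : ℕ := ⌈Real.log t / ρ⌉₊

/-- The set `L_t` of generations used for the sparse subtree `W`. -/
def LtSet (C1 nt : ℕ) : Set ℕ :=
  {l | C1 ∣ l ∧ (nt : ℝ) - Real.sqrt nt ≤ l ∧ (l : ℝ) < nt - Real.sqrt nt / 2}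

namespace Setup

variable {d : ℕ} {Ω : Type} [MeasurableSpace Ω] (S : Setup d Ω)

/-- The sparse (random) subtree `W ⊆ T`: nodes whose generation lies in `L_t`
and whose last `C1` entries are all equal to `1`. -/
def Wsparse (C1 nt : ℕ) (ω : Ω) : Set (List ℕ) :=
  {i | memT S.Nn ω i ∧ i.length ∈ LtSet C1 nt ∧
    ∀ k : Fin i.length, i.length - C1 ≤ (k : ℕ) → i.get k = 1}

/-- `E[∑_{i ∈ W} P(V_{i,t})]` for a random subset `W` of the tree. -/
def ESumV (u : Vec d) (C0 δ t : ℝ) (W : Ω → Set (List ℕ)) : ENNReal :=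
  ∫⁻ ω, ∑' i : List ℕ, Set.indicator (W ω) (fun i' => S.P (S.Vset u C0 δ t i')) i ∂S.P

/-- `E[∑_{i ∈ W} ∑_{i' ∈ W, |i'| ≤ |i|, i' ≠ i} P(W_{i,i',t})]` for a random
subset `W` of the tree. -/
def ESumW (u : Vec d) (C0 δ t : ℝ) (W : Ω → Set (List ℕ)) : ENNReal :=
  ∫⁻ ω, ∑' p : List ℕ × List ℕ,
    Set.indicator {p' : List ℕ × List ℕ |
        p'.1 ∈ W ω ∧ p'.2 ∈ W ω ∧ p'.2.length ≤ p'.1.length ∧ p'.2 ≠ p'.1}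
      (fun p' => S.P (S.Wset u C0 δ t p'.1 p'.2)) p ∂S.P

end Setup

/-- The number of nodes in a set of nodes, as an element of `ENNReal`. -/
def countNodes (s : Set (List ℕ)) : ENNReal :=
  ∑' i : List ℕ, Set.indicator s (fun _ => (1 : ENNReal)) i
/-- The support of a measure on matrices: points all of whose neighbourhoods
have positive measure. -/
def msupp {d : ℕ} (μm : MeasureTheory.Measure (Mat d)) : Set (Mat d) :=
  {a | ∀ U : Set (Mat d), IsOpen U → a ∈ U → μm U ≠ 0}

/-- A nonnegative matrix which has no zero row and no zero column. -/
def Allowable {d : ℕ} (a : Mat d) : Prop :=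
  (∀ r c, 0 ≤ a r c) ∧ (∀ r, ∃ c, a r c ≠ 0) ∧ (∀ c, ∃ r, a r c ≠ 0)

/-- A matrix with strictly positive entries. -/
def PosMat {d : ℕ} (a : Mat d) : Prop := ∀ r c, 0 < a r c

/-- A proximal matrix: it has an algebraically simple real eigenvalue which
strictly dominates all other (complex) eigenvalues in absolute value. -/
def Proximal {d : ℕ} (a : Mat d) : Prop :=
  ∃ lam : ℝ, Polynomial.rootMultiplicity (lam : ℂ)
      ((Matrix.charpoly a).map (algebraMap ℝ ℂ)) = 1 ∧
    ∀ z : ℂ, ((Matrix.charpoly a).map (algebraMap ℝ ℂ)).IsRoot z → z ≠ (lam : ℂ) →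
      ‖z‖ < |lam|

/-- Strong irreducibility of (the semigroup generated by the support of) `μ`:
there is no `Γ`-invariant finite union of proper nonzero subspaces. -/
def StrongIrred {d : ℕ} (μm : MeasureTheory.Measure (Mat d)) : Prop :=
  ¬ ∃ F : Finset (Submodule ℝ (Vec d)), F.Nonempty ∧ (∀ W ∈ F, W ≠ ⊥ ∧ W ≠ ⊤) ∧
    ∀ a ∈ Subsemigroup.closure (msupp μm), ∀ x ∈ ⋃ W ∈ F, (W : Set (Vec d)),
      mv a x ∈ ⋃ W ∈ F, (W : Set (Vec d))

/-- There is no `Γ`-invariant proper closed convex cone. -/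
def NoInvCone {d : ℕ} (μm : MeasureTheory.Measure (Mat d)) : Prop :=
  ¬ ∃ C : Set (Vec d), IsClosed C ∧ Convex ℝ C ∧
    (∀ r : ℝ, 0 ≤ r → ∀ x ∈ C, r • x ∈ C) ∧ C ≠ {0} ∧ C.Nonempty ∧
    C ∩ (-C) ⊆ {0} ∧ ∀ a ∈ Subsemigroup.closure (msupp μm), ∀ x ∈ C, mv a x ∈ C

/-- Condition (i-p,o): strong irreducibility, proximality, and absence of an
invariant proper closed convex cone. -/
def IPO {d : ℕ} (μm : MeasureTheory.Measure (Mat d)) : Prop :=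
  StrongIrred μm ∧ (∃ a ∈ Subsemigroup.closure (msupp μm), Proximal a) ∧ NoInvCone μm

/-- The set `S(Γ)` of logarithms of dominant eigenvalues (with nonnegative
eigenvector) of the positive matrices of the semigroup `Γ`. -/
def DomEigLog {d : ℕ} (μm : MeasureTheory.Measure (Mat d)) : Set ℝ :=
  {x | ∃ a ∈ Subsemigroup.closure (msupp μm), PosMat a ∧
    ∃ v : Vec d, v ≠ 0 ∧ (∀ i, 0 ≤ v i) ∧ mv a v = Real.exp x • v}

/-- `μ` is non-arithmetic: the additive subgroup generated by `S(Γ)` is dense. -/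
def NonArith {d : ℕ} (μm : MeasureTheory.Measure (Mat d)) : Prop :=
  Dense ((AddSubgroup.closure (DomEigLog μm) : AddSubgroup ℝ) : Set ℝ)

/-- Marker for the two geometric settings: `ga` for nonnegative matrices
(condition (C)), `gb` for invertible matrices (conditions (i-p,o) or (i-d)). -/
inductive GeoCase | ga | gb

/-- The relevant part of the unit sphere: `S^{d-1} ∩ [0,∞)^d` in case (Ga), the
whole sphere `S^{d-1}` in case (Gb). -/
def Sph (d : ℕ) : GeoCase → Set (Vec d)
  | GeoCase.ga => {x | ‖x‖ = 1 ∧ ∀ i, 0 ≤ x i}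
  | GeoCase.gb => {x | ‖x‖ = 1}

/-- The relevant cone: `[0,∞)^d` in case (Ga), all of `ℝ^d` in case (Gb). -/
def coneSpace (d : ℕ) : GeoCase → Set (Vec d)
  | GeoCase.ga => {x | ∀ i, 0 ≤ x i}
  | GeoCase.gb => Set.univ

/-- `ι(a) := inf_{x ∈ S} |ax|`. -/
def iotaS (d : ℕ) (g : GeoCase) (a : Mat d) : ℝ :=
  sInf ((fun x => ‖mv a x‖) '' Sph d g)

namespace Setup

variable {d : ℕ} {Ω : Type} [MeasurableSpace Ω] (S : Setup d Ω)

/-- Condition (i-d): the projective chain can reach every open set of the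
sphere, and some power of `Π_n^*` has a density component. -/
def IDcond : Prop :=
  (∀ B : Set (Vec d), IsOpen B → ∀ x : Vec d, ‖x‖ = 1 → (∃ y ∈ B, ‖y‖ = 1) →
    ∃ n : ℕ, S.P {ω | (‖mv (S.PiStar n ω) x‖)⁻¹ • mv (S.PiStar n ω) x ∈ B} ≠ 0) ∧
  (∃ m0 : Mat d, IsUnit m0 ∧ ∃ dl : ℝ, 0 < dl ∧ ∃ c : ℝ, 0 < c ∧ ∃ n0 : ℕ,
    ∀ E : Set (Mat d), MeasurableSet E →
      ENNReal.ofReal c * MeasureTheory.volume (E ∩ {m : Mat d | opNorm (m - m0) < dl})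
        ≤ S.P.map (S.PiStar n0) E)

/-- Geometric assumption (Ga): nonnegative allowable matrices, a strictly
positive matrix in the semigroup, non-arithmeticity; `Q` is nonnegative too. -/
def GaCond : Prop :=
  (∀ᵐ ω ∂S.P, (∀ l, 0 ≤ S.Qn ([]) ω l) ∧ ∀ i r c, 0 ≤ S.An ([]) i ω r c) ∧
  (∀ a ∈ msupp S.muA, Allowable a) ∧
  (∃ a ∈ Subsemigroup.closure (msupp S.muA), PosMat a) ∧
  NonArith S.muA

/-- Geometric assumption (Gb): invertible matrices satisfying (i-p,o) or (i-d). -/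
def GbCond : Prop :=
  (∀ᵐ ω ∂S.P, ∀ i, 1 ≤ i → i ≤ S.Nn ([]) ω → IsUnit (S.An ([]) i ω)) ∧
  (IPO S.muA ∨ S.IDcond)

/-- The geometric assumption corresponding to the case marker. -/
def GeoH : GeoCase → Prop
  | GeoCase.ga => S.GaCond
  | GeoCase.gb => S.GbCond

/-- Case (N-random): `1 < E[N] < ∞`; conditioned upon `N`, the matrices
`(A_i)_{i=1}^N` are i.i.d. (with the law of `A_1`), and `Q` is independent of
`(N, (A_i)_{i ≥ 1})`. -/
def NRandom : Prop :=
  MeasureTheory.Integrable (fun ω => (S.Nn ([]) ω : ℝ)) S.P ∧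
  1 < S.EN ∧
  (∀ n : ℕ, S.P {ω | S.Nn ([]) ω = n} ≠ 0 →
    ProbabilityTheory.iIndepFun (m := fun _ : Fin n => matMeasurableSpace)
      (fun i ω => S.An ([]) ((i : ℕ) + 1) ω)
      (ProbabilityTheory.cond S.P {ω | S.Nn ([]) ω = n}) ∧
    ∀ i : Fin n,
      (ProbabilityTheory.cond S.P {ω | S.Nn ([]) ω = n}).map (S.An ([]) ((i : ℕ) + 1))
        = S.P.map (S.An ([]) 1)) ∧
  ProbabilityTheory.IndepFun (S.Qn ([]))
    (fun ω => (S.Nn ([]) ω, fun i => S.An ([]) i ω)) S.P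

/-- Case (N-fixed): `N ≥ 2` is constant, the supports of the `A_i` are bounded,
and `(A_i)_{i=1}^N` are exchangeable (hence identically distributed). -/
def NFixed : Prop :=
  ∃ n : ℕ, 2 ≤ n ∧ (∀ ω, S.Nn ([]) ω = n) ∧
    (∃ c : ℝ, ∀ᵐ ω ∂S.P, ∀ i, opNorm (S.An ([]) i ω) ≤ c) ∧
    ∀ σ : Equiv.Perm (Fin n),
      S.P.map (fun ω (i : Fin n) => S.An ([]) ((i : ℕ) + 1) ω)
        = S.P.map (fun ω (i : Fin n) => S.An ([]) (((σ i : Fin n) : ℕ) + 1) ω)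

/-- Moment assumptions (M1): `0 < α < β`, `m(α) = m(β) = 1`,
`E|Q|^{β+ε} < ∞` and `E[‖A_1^*‖^{β+ε} ι(A_1^*)^{-ε}] < ∞`. -/
def M1 (g : GeoCase) (α β ε : ℝ) : Prop :=
  0 < α ∧ α < β ∧ 0 < ε ∧ S.mFun α = 1 ∧ S.mFun β = 1 ∧
  MeasureTheory.Integrable (fun ω => ‖S.Qn ([]) ω‖ ^ (β + ε)) S.P ∧
  MeasureTheory.Integrable
    (fun ω => opNorm ((S.An ([]) 1 ω)ᵀ) ^ (β + ε) * iotaS d g ((S.An ([]) 1 ω)ᵀ) ^ (-ε)) S.P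

/-- `X` is a fixed point of the multivariate smoothing transform:
`X` has the same law as `∑_{i=1}^N A_i X_i + Q`, where the `X_i = X_{(i)}` are
the i.i.d. copies of `X` attached to the first generation, independent of
`(Q, (A_i))`. -/
def FixedPoint : Prop :=
  S.P.map S.X
    = S.P.map (fun ω =>
        (∑ i ∈ Finset.Icc 1 (S.Nn ([]) ω), mv (S.An ([]) i ω) (S.Xn ([i]) ω)) + S.Qn ([]) ω)

/-- Moment assumption (M2): `X` is a nondegenerate fixed point with
`E|X|^s < ∞` for all `s < β`. -/
def M2 (β : ℝ) : Prop :=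
  S.FixedPoint ∧ (¬ ∃ c : Vec d, ∀ᵐ ω ∂S.P, S.X ω = c) ∧
  ∀ s : ℝ, 0 ≤ s → s < β → MeasureTheory.Integrable (fun ω => ‖S.X ω‖ ^ s) S.P

end Setup


section AuxLemmas

set_option synthInstance.maxHeartbeats 1000000
set_option maxHeartbeats 1000000

variable {d : ℕ}

lemma mv_zero_mat (x : Vec d) : mv (0 : Mat d) x = 0 := by simp [mv]

lemma mv_zero_vec (a : Mat d) : mv a (0 : Vec d) = 0 := map_zero (Matrix.toEuclideanLin a)

lemma mv_one_mat (x : Vec d) : mv (1 : Mat d) x = x := by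
  simp [mv, Matrix.toEuclideanLin_apply, Matrix.one_mulVec]

lemma mv_mul_mat (a b : Mat d) (x : Vec d) : mv (a * b) x = mv a (mv b x) := by
  simp [mv, Matrix.toEuclideanLin_apply, Matrix.mulVec_mulVec]

lemma mv_add_vec (a : Mat d) (x y : Vec d) : mv a (x + y) = mv a x + mv a y :=
  map_add (Matrix.toEuclideanLin a) x y

lemma mv_eq_clm (a : Mat d) (x : Vec d) : mv a x = Matrix.toEuclideanCLM (𝕜 := ℝ) a x := by
  rw [mv, ← Matrix.coe_toEuclideanCLM_eq_toEuclideanLin]; rfl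

lemma norm_mv_le (a : Mat d) (x : Vec d) : ‖mv a x‖ ≤ opNorm a * ‖x‖ := by
  rw [mv_eq_clm, opNorm]; exact ContinuousLinearMap.le_opNorm _ x

lemma opNorm_transpose (a : Mat d) : opNorm aᵀ = opNorm a := by
  have h : aᵀ = star a := by ext r c; simp [Matrix.star_apply]
  rw [opNorm, opNorm, h, map_star, ContinuousLinearMap.star_eq_adjoint]
  exact ContinuousLinearMap.adjoint.norm_map _

lemma inner_mv_transpose (a : Mat d) (x y : Vec d) : ⟪mv aᵀ x, y⟫ = ⟪x, mv a y⟫ := by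
  have h : aᵀ = aᴴ := by ext r c; simp [Matrix.conjTranspose_apply]
  rw [mv, mv, h, Matrix.toEuclideanLin_conjTranspose_eq_adjoint]
  exact LinearMap.adjoint_inner_left (Matrix.toEuclideanLin a) y x

lemma pathProdFrom_nil {Ω : Type} (An : List ℕ → ℕ → Ω → Mat d) (j : List ℕ) (ω : Ω) :
    pathProdFrom An j ([]) ω = 1 := by simp [pathProdFrom]

lemma pathProdFrom_cons {Ω : Type} (An : List ℕ → ℕ → Ω → Mat d) (j : List ℕ) (c : ℕ)
    (r : List ℕ) (ω : Ω) :
    pathProdFrom An j (c :: r) ω = An j c ω * pathProdFrom An (j ++ [c]) r ω := by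
  unfold pathProdFrom
  rw [show (List.ofFn (fun k : Fin (c :: r).length =>
        An (j ++ (c :: r).take (k : ℕ)) ((c :: r).get k) ω))
      = (List.ofFn (fun k : Fin (r.length + 1) =>
        An (j ++ (c :: r).take (k : ℕ)) ((c :: r).get k) ω)) from rfl]
  rw [List.ofFn_succ, List.prod_cons]
  congr 1
  · simp
  · apply congrArg
    apply congrArg
    funext k
    show An (j ++ (c :: r).take ((k.succ : Fin (r.length+1)) : ℕ)) ((c :: r).get k.succ) ω
        = An ((j ++ [c]) ++ r.take (k : ℕ)) (r.get k) ω
    rw [Fin.val_succ, List.take_succ_cons, ← List.append_cons]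
    simp

lemma pathProdFrom_concat {Ω : Type} (An : List ℕ → ℕ → Ω → Mat d) (j i : List ℕ) (c : ℕ)
    (ω : Ω) :
    pathProdFrom An j (i ++ [c]) ω = pathProdFrom An j i ω * An (j ++ i) c ω := by
  induction i generalizing j with
  | nil =>
    rw [List.nil_append, pathProdFrom_cons, pathProdFrom_nil, pathProdFrom_nil,
      List.append_nil, one_mul, mul_one]
  | cons b i' ih =>
    rw [List.cons_append, pathProdFrom_cons, ih, ← List.append_cons, pathProdFrom_cons]
    exact (mul_assoc _ _ _).symm

lemma pathProd_concat {Ω : Type} (An : List ℕ → ℕ → Ω → Mat d) (i : List ℕ) (c : ℕ) (ω : Ω) :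
    pathProd An (i ++ [c]) ω = pathProd An i ω * An i c ω := by
  rw [pathProd, pathProd, pathProdFrom_concat, List.nil_append]

lemma tsum_list_split {E : Type} [AddCommGroup E] [UniformSpace E] [IsUniformAddGroup E]
    [CompleteSpace E] [T2Space E] (f : List ℕ → E) (hf : Summable f) :
    ∑' i : List ℕ, f i = f ([]) + ∑' (c : ℕ), ∑' (r : List ℕ), f (c :: r) := by
  classical
  set f1 : List ℕ → E := fun i => if i = ([]) then 0 else f i with hf1def
  have hsplit : f = (fun i => if i = ([]) then f i else 0) + f1 := by
    funext i; by_cases h : i = ([]) <;> simp [f1, h]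
  have h0 : Summable (fun i => if i = ([]) then f i else 0) := by
    refine summable_of_ne_finset_zero (s := {([])}) ?_
    intro b hb
    simp only [Finset.mem_singleton] at hb
    simp [hb]
  have h1 : Summable f1 := by
    have h := hf.sub h0
    refine h.congr fun i => ?_
    by_cases hi : i = ([]) <;> simp [f1, hi]
  have hinj : Function.Injective (fun p : ℕ × List ℕ => p.1 :: p.2) := by
    intro p q h
    cases p; cases q
    simpa [Prod.ext_iff] using h
  have hrange : Function.support f1 ⊆ Set.range (fun p : ℕ × List ℕ => p.1 :: p.2) := by
    intro i hi
    cases i with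
    | nil => simp [f1] at hi
    | cons c r => exact ⟨(c, r), rfl⟩
  have key : ∑' p : ℕ × List ℕ, f1 (p.1 :: p.2) = ∑' i, f1 i := hinj.tsum_eq hrange
  have hsum1 : Summable (fun p : ℕ × List ℕ => f1 (p.1 :: p.2)) :=
    h1.comp_injective (i := fun p : ℕ × List ℕ => p.1 :: p.2) hinj
  have hfib : ∀ c : ℕ, Summable fun r : List ℕ => f1 (c :: r) := fun c =>
    h1.comp_injective (i := fun r : List ℕ => c :: r) (fun r s h => by simpa using h)
  have hT : ∑' i, f i = (∑' i, if i = ([]) then f i else 0) + ∑' i, f1 i := by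
    rw [← Summable.tsum_add h0 h1]
    exact tsum_congr fun i => congrFun hsplit i
  rw [hT, tsum_eq_single ([]) (fun b hb => by simp [hb]), if_pos rfl, ← key,
    Summable.tsum_prod' hsum1 hfib]
  refine congrArg _ (tsum_congr fun c => tsum_congr fun r => ?_)
  simp [f1]

variable {Ω : Type} [MeasurableSpace Ω] (S : Setup d Ω)

lemma Setup.finite_paths (ω : Ω) :
    ∀ (m : ℕ) (j : List ℕ),
      {i : List ℕ | i.length ≤ m ∧ pathProdFrom S.An j i ω ≠ 0}.Finite := by
  intro m
  induction m with
  | zero =>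
    intro j
    refine Set.Finite.subset (Set.finite_singleton ([] : List ℕ)) ?_
    rintro i ⟨hl, -⟩
    simp [List.length_eq_zero_iff.mp (Nat.le_zero.mp hl)]
  | succ m ih =>
    intro j
    refine Set.Finite.subset (Set.Finite.insert ([])
      (Set.Finite.biUnion (Set.finite_Icc 1 (S.Nn j ω))
        (fun c _ => ((ih (j ++ [c])).image (List.cons c))))) ?_
    rintro i ⟨hl, hp⟩
    cases i with
    | nil => exact Set.mem_insert _ _
    | cons c r =>
      rw [pathProdFrom_cons] at hp
      have hA : S.An j c ω ≠ 0 := by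
        intro h; exact hp (by rw [h, zero_mul])
      have hc1 : 1 ≤ c := by
        rcases Nat.eq_zero_or_pos c with h | h
        · exact absurd (h ▸ S.hA0 j ω) hA
        · exact h
      have hc2 : c ≤ S.Nn j ω := by
        by_contra h
        exact hA (S.hNmax j ω c (lt_of_not_ge h))
      refine Set.mem_insert_iff.mpr (Or.inr ?_)
      refine Set.mem_biUnion (Set.mem_Icc.mpr ⟨hc1, hc2⟩) ?_
      refine ⟨r, ⟨?_, ?_⟩, rfl⟩
      · simp only [List.length_cons] at hl; omega
      · intro h; exact hp (by rw [h, mul_zero])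

lemma Setup.summable_aux (ω : Ω) (m : ℕ) (j : List ℕ) (f : List ℕ → Vec d)
    (hf : ∀ i, f i ≠ 0 → i.length ≤ m ∧ pathProdFrom S.An j i ω ≠ 0) :
    Summable f := by
  classical
  refine summable_of_ne_finset_zero (s := (S.finite_paths ω m j).toFinset) ?_
  intro b hb
  by_contra h
  exact hb ((S.finite_paths ω m j).mem_toFinset.mpr (hf b h))

lemma Setup.Ysub_rec (j : List ℕ) (m : ℕ) (hm : 1 ≤ m) (ω : Ω) :
    S.Ysub j m ω
      = (∑ c ∈ Finset.Icc 1 (S.Nn j ω), mv (S.An j c ω) (S.Ysub (j ++ [c]) (m - 1) ω))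
        + S.Qn j ω := by
  classical
  have hQ : ∀ (j' : List ℕ) (i : List ℕ),
      (if i.length < m - 1 then mv (pathProdFrom S.An j' i ω) (S.Qn (j' ++ i) ω) else 0) ≠ 0 →
      i.length ≤ m - 1 ∧ pathProdFrom S.An j' i ω ≠ 0 := by
    intro j' i hi
    split_ifs at hi with h
    · exact ⟨le_of_lt h, fun hz => hi (by rw [hz, mv_zero_mat])⟩
    · exact absurd rfl hi
  have hfQs : Summable (fun i : List ℕ =>
      if i.length < m then mv (pathProdFrom S.An j i ω) (S.Qn (j ++ i) ω) else 0) := by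
    refine S.summable_aux ω m j _ fun i hi => ?_
    split_ifs at hi with h
    · exact ⟨le_of_lt h, fun hz => hi (by rw [hz, mv_zero_mat])⟩
    · exact absurd rfl hi
  have hfXs : Summable (fun i : List ℕ =>
      if i.length = m then mv (pathProdFrom S.An j i ω) (S.Xn (j ++ i) ω) else 0) := by
    refine S.summable_aux ω m j _ fun i hi => ?_
    split_ifs at hi with h
    · exact ⟨le_of_eq h, fun hz => hi (by rw [hz, mv_zero_mat])⟩
    · exact absurd rfl hi
  have hgQs : ∀ c : ℕ, Summable (fun r : List ℕ =>
      if r.length < m - 1 then mv (pathProdFrom S.An (j ++ [c]) r ω) (S.Qn ((j ++ [c]) ++ r) ω)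
      else 0) := by
    intro c
    refine S.summable_aux ω (m - 1) (j ++ [c]) _ fun r hr => ?_
    split_ifs at hr with h
    · exact ⟨le_of_lt h, fun hz => hr (by rw [hz, mv_zero_mat])⟩
    · exact absurd rfl hr
  have hgXs : ∀ c : ℕ, Summable (fun r : List ℕ =>
      if r.length = m - 1 then mv (pathProdFrom S.An (j ++ [c]) r ω) (S.Xn ((j ++ [c]) ++ r) ω)
      else 0) := by
    intro c
    refine S.summable_aux ω (m - 1) (j ++ [c]) _ fun r hr => ?_
    split_ifs at hr with h
    · exact ⟨le_of_eq h, fun hz => hr (by rw [hz, mv_zero_mat])⟩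
    · exact absurd rfl hr
  have hconsQ : ∀ (c : ℕ) (r : List ℕ),
      (if (c :: r).length < m then mv (pathProdFrom S.An j (c :: r) ω) (S.Qn (j ++ c :: r) ω)
        else 0)
      = mv (S.An j c ω)
          (if r.length < m - 1 then
            mv (pathProdFrom S.An (j ++ [c]) r ω) (S.Qn ((j ++ [c]) ++ r) ω) else 0) := by
    intro c r
    have hlen : ((c :: r).length < m) ↔ (r.length < m - 1) := by
      simp only [List.length_cons]; omega
    by_cases h : r.length < m - 1
    · rw [if_pos (hlen.mpr h), if_pos h, pathProdFrom_cons, mv_mul_mat, ← List.append_cons]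
    · rw [if_neg (fun hh => h (hlen.mp hh)), if_neg h, mv_zero_vec]
  have hconsX : ∀ (c : ℕ) (r : List ℕ),
      (if (c :: r).length = m then mv (pathProdFrom S.An j (c :: r) ω) (S.Xn (j ++ c :: r) ω)
        else 0)
      = mv (S.An j c ω)
          (if r.length = m - 1 then
            mv (pathProdFrom S.An (j ++ [c]) r ω) (S.Xn ((j ++ [c]) ++ r) ω) else 0) := by
    intro c r
    have hlen : ((c :: r).length = m) ↔ (r.length = m - 1) := by
      simp only [List.length_cons]; omega
    by_cases h : r.length = m - 1
    · rw [if_pos (hlen.mpr h), if_pos h, pathProdFrom_cons, mv_mul_mat, ← List.append_cons]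
    · rw [if_neg (fun hh => h (hlen.mp hh)), if_neg h, mv_zero_vec]
  have hAzero : ∀ c : ℕ, c ∉ Finset.Icc 1 (S.Nn j ω) → S.An j c ω = 0 := by
    intro c hc
    simp only [Finset.mem_Icc, not_and_or, not_le] at hc
    rcases hc with h | h
    · interval_cases c
      exact S.hA0 j ω
    · exact S.hNmax j ω c h
  rw [Setup.Ysub]
  rw [tsum_list_split _ hfQs, tsum_list_split _ hfXs]
  have e0Q : (if ([] : List ℕ).length < m then
      mv (pathProdFrom S.An j ([]) ω) (S.Qn (j ++ ([])) ω) else 0) = S.Qn j ω := by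
    rw [if_pos (by simp only [List.length_nil]; omega), pathProdFrom_nil, mv_one_mat, List.append_nil]
  have e0X : (if ([] : List ℕ).length = m then
      mv (pathProdFrom S.An j ([]) ω) (S.Xn (j ++ ([])) ω) else 0) = 0 := by
    rw [if_neg (by simp only [List.length_nil]; omega : ¬(([] : List ℕ).length = m))]
  rw [e0Q, e0X, zero_add]
  have eQ : ∀ c : ℕ,
      (∑' r : List ℕ, if (c :: r).length < m then
          mv (pathProdFrom S.An j (c :: r) ω) (S.Qn (j ++ c :: r) ω) else 0)
        = mv (S.An j c ω) (∑' r : List ℕ,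
            if r.length < m - 1 then
              mv (pathProdFrom S.An (j ++ [c]) r ω) (S.Qn ((j ++ [c]) ++ r) ω) else 0) := by
    intro c
    calc (∑' r : List ℕ, if (c :: r).length < m then
          mv (pathProdFrom S.An j (c :: r) ω) (S.Qn (j ++ c :: r) ω) else 0)
        = ∑' r : List ℕ, Matrix.toEuclideanCLM (𝕜 := ℝ) (S.An j c ω)
            (if r.length < m - 1 then
              mv (pathProdFrom S.An (j ++ [c]) r ω) (S.Qn ((j ++ [c]) ++ r) ω) else 0) :=
        tsum_congr fun r => (hconsQ c r).trans (mv_eq_clm _ _)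
      _ = Matrix.toEuclideanCLM (𝕜 := ℝ) (S.An j c ω) (∑' r : List ℕ,
            if r.length < m - 1 then
              mv (pathProdFrom S.An (j ++ [c]) r ω) (S.Qn ((j ++ [c]) ++ r) ω) else 0) :=
        ((Matrix.toEuclideanCLM (𝕜 := ℝ) (S.An j c ω)).map_tsum (hgQs c)).symm
      _ = mv (S.An j c ω) (∑' r : List ℕ,
            if r.length < m - 1 then
              mv (pathProdFrom S.An (j ++ [c]) r ω) (S.Qn ((j ++ [c]) ++ r) ω) else 0) :=
        (mv_eq_clm _ _).symm
  have eX : ∀ c : ℕ,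
      (∑' r : List ℕ, if (c :: r).length = m then
          mv (pathProdFrom S.An j (c :: r) ω) (S.Xn (j ++ c :: r) ω) else 0)
        = mv (S.An j c ω) (∑' r : List ℕ,
            if r.length = m - 1 then
              mv (pathProdFrom S.An (j ++ [c]) r ω) (S.Xn ((j ++ [c]) ++ r) ω) else 0) := by
    intro c
    calc (∑' r : List ℕ, if (c :: r).length = m then
          mv (pathProdFrom S.An j (c :: r) ω) (S.Xn (j ++ c :: r) ω) else 0)
        = ∑' r : List ℕ, Matrix.toEuclideanCLM (𝕜 := ℝ) (S.An j c ω)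
            (if r.length = m - 1 then
              mv (pathProdFrom S.An (j ++ [c]) r ω) (S.Xn ((j ++ [c]) ++ r) ω) else 0) :=
        tsum_congr fun r => (hconsX c r).trans (mv_eq_clm _ _)
      _ = Matrix.toEuclideanCLM (𝕜 := ℝ) (S.An j c ω) (∑' r : List ℕ,
            if r.length = m - 1 then
              mv (pathProdFrom S.An (j ++ [c]) r ω) (S.Xn ((j ++ [c]) ++ r) ω) else 0) :=
        ((Matrix.toEuclideanCLM (𝕜 := ℝ) (S.An j c ω)).map_tsum (hgXs c)).symm
      _ = mv (S.An j c ω) (∑' r : List ℕ,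
            if r.length = m - 1 then
              mv (pathProdFrom S.An (j ++ [c]) r ω) (S.Xn ((j ++ [c]) ++ r) ω) else 0) :=
        (mv_eq_clm _ _).symm
  rw [tsum_congr eQ, tsum_congr eX]
  have hQfin : (∑' c : ℕ, mv (S.An j c ω) (∑' r : List ℕ,
        if r.length < m - 1 then
          mv (pathProdFrom S.An (j ++ [c]) r ω) (S.Qn ((j ++ [c]) ++ r) ω) else 0))
      = ∑ c ∈ Finset.Icc 1 (S.Nn j ω), mv (S.An j c ω) (∑' r : List ℕ,
        if r.length < m - 1 then
          mv (pathProdFrom S.An (j ++ [c]) r ω) (S.Qn ((j ++ [c]) ++ r) ω) else 0) := by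
    refine tsum_eq_sum fun c hc => ?_
    rw [hAzero c hc, mv_zero_mat]
  have hXfin : (∑' c : ℕ, mv (S.An j c ω) (∑' r : List ℕ,
        if r.length = m - 1 then
          mv (pathProdFrom S.An (j ++ [c]) r ω) (S.Xn ((j ++ [c]) ++ r) ω) else 0))
      = ∑ c ∈ Finset.Icc 1 (S.Nn j ω), mv (S.An j c ω) (∑' r : List ℕ,
        if r.length = m - 1 then
          mv (pathProdFrom S.An (j ++ [c]) r ω) (S.Xn ((j ++ [c]) ++ r) ω) else 0) := by
    refine tsum_eq_sum fun c hc => ?_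
    rw [hAzero c hc, mv_zero_mat]
  rw [hQfin, hXfin]
  rw [Finset.sum_congr rfl (fun c (_ : c ∈ Finset.Icc 1 (S.Nn j ω)) =>
    show mv (S.An j c ω) (S.Ysub (j ++ [c]) (m - 1) ω) = _ from by
      rw [show S.Ysub (j ++ [c]) (m - 1) ω
          = (∑' r : List ℕ, if r.length < m - 1 then
              mv (pathProdFrom S.An (j ++ [c]) r ω) (S.Qn ((j ++ [c]) ++ r) ω) else 0)
            + (∑' r : List ℕ, if r.length = m - 1 then
              mv (pathProdFrom S.An (j ++ [c]) r ω) (S.Xn ((j ++ [c]) ++ r) ω) else 0) from rfl,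
        mv_add_vec])]
  rw [Finset.sum_add_distrib]
  abel

lemma Setup.Ysub_split (l : ℕ) (j : List ℕ) (c : ℕ) (hm : 1 ≤ l - j.length) (ω : Ω) :
    S.Ysub j (l - j.length) ω
      = mv (S.An j c ω) (S.Ysub (j ++ [c]) (l - j.length - 1) ω) + S.Zwbp l j c ω := by
  classical
  rw [S.Ysub_rec j _ hm ω, Setup.Zwbp]
  by_cases hc : c ∈ Finset.Icc 1 (S.Nn j ω)
  · rw [← Finset.add_sum_erase _ _ hc]
    abel
  · rw [Finset.erase_eq_of_notMem hc]
    have hA : S.An j c ω = 0 := by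
      simp only [Finset.mem_Icc, not_and_or, not_le] at hc
      rcases hc with h | h
      · interval_cases c
        exact S.hA0 j ω
      · exact S.hNmax j ω c h
    rw [hA, mv_zero_mat]
    abel

lemma Setup.inner_Y_eq (l : ℕ) (u : Vec d) (ω : Ω) :
    ∀ i : List ℕ, i.length ≤ l →
      ⟪u, S.Y l ω⟫
        = ⟪mv ((pathProd S.An i ω)ᵀ) u, S.Ysub i (l - i.length) ω⟫
          + ∑ k : Fin i.length,
              ⟪mv ((pathProd S.An (i.take (k : ℕ)) ω)ᵀ) u,
                S.Zwbp l (i.take (k : ℕ)) (i.get k) ω⟫ := by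
  intro i
  induction i using List.reverseRecOn with
  | nil =>
    intro _
    simp only [List.length_nil, Nat.sub_zero, Finset.univ_eq_empty, Finset.sum_empty, add_zero]
    rw [show pathProd S.An ([]) ω = 1 from pathProdFrom_nil S.An ([]) ω,
      Matrix.transpose_one, mv_one_mat]
    rfl
  | append_singleton j c ih =>
    intro hlen
    have hlen1 : (j ++ [c]).length = j.length + 1 := by simp
    have hjl : j.length ≤ l := by omega
    rw [ih hjl, S.Ysub_split l j c (by omega) ω, inner_add_right]
    have h1 : ⟪mv ((pathProd S.An j ω)ᵀ) u,
        mv (S.An j c ω) (S.Ysub (j ++ [c]) (l - j.length - 1) ω)⟫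
        = ⟪mv ((pathProd S.An (j ++ [c]) ω)ᵀ) u,
            S.Ysub (j ++ [c]) (l - (j ++ [c]).length) ω⟫ := by
      rw [inner_mv_transpose, ← mv_mul_mat, ← pathProd_concat, ← inner_mv_transpose]
      rw [show l - (j ++ [c]).length = l - j.length - 1 by omega]
    rw [h1]
    have h2 : (∑ k : Fin (j ++ [c]).length,
        ⟪mv ((pathProd S.An ((j ++ [c]).take (k : ℕ)) ω)ᵀ) u,
          S.Zwbp l ((j ++ [c]).take (k : ℕ)) ((j ++ [c]).get k) ω⟫)
        = (∑ k : Fin j.length,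
            ⟪mv ((pathProd S.An (j.take (k : ℕ)) ω)ᵀ) u,
              S.Zwbp l (j.take (k : ℕ)) (j.get k) ω⟫)
          + ⟪mv ((pathProd S.An j ω)ᵀ) u, S.Zwbp l j c ω⟫ := by
      set G : Fin ((j ++ [c]).length) → ℝ := fun k =>
        ⟪mv ((pathProd S.An ((j ++ [c]).take (k : ℕ)) ω)ᵀ) u,
          S.Zwbp l ((j ++ [c]).take (k : ℕ)) ((j ++ [c]).get k) ω⟫ with hG
      rw [← Fin.sum_congr' G hlen1.symm, Fin.sum_univ_castSucc]
      congr 1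
      · refine Finset.sum_congr rfl fun k _ => ?_
        have hk : (k : ℕ) < j.length := k.isLt
        rw [hG]
        show ⟪mv ((pathProd S.An
              ((j ++ [c]).take ((Fin.cast hlen1.symm k.castSucc : Fin _) : ℕ)) ω)ᵀ) u,
            S.Zwbp l ((j ++ [c]).take ((Fin.cast hlen1.symm k.castSucc : Fin _) : ℕ))
              ((j ++ [c]).get (Fin.cast hlen1.symm k.castSucc)) ω⟫ = _
        have hval : ((Fin.cast hlen1.symm k.castSucc : Fin ((j ++ [c]).length)) : ℕ)
            = (k : ℕ) := rfl
        have ht : (j ++ [c]).take ((Fin.cast hlen1.symm k.castSucc : Fin _) : ℕ)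
            = j.take (k : ℕ) := by
          rw [hval]
          exact List.take_append_of_le_length (le_of_lt hk)
        have hg : (j ++ [c]).get (Fin.cast hlen1.symm k.castSucc) = j.get k := by
          rw [List.get_eq_getElem, List.get_eq_getElem]
          exact List.getElem_append_left hk
        rw [ht, hg]
      · rw [hG]
        show ⟪mv ((pathProd S.An
              ((j ++ [c]).take ((Fin.cast hlen1.symm (Fin.last j.length) : Fin _) : ℕ)) ω)ᵀ) u,
            S.Zwbp l ((j ++ [c]).take ((Fin.cast hlen1.symm (Fin.last j.length) : Fin _) : ℕ))
              ((j ++ [c]).get (Fin.cast hlen1.symm (Fin.last j.length))) ω⟫ = _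
        have ht : (j ++ [c]).take ((Fin.cast hlen1.symm (Fin.last j.length) : Fin _) : ℕ)
            = j := by
          show (j ++ [c]).take j.length = j
          simp
        have hg : (j ++ [c]).get (Fin.cast hlen1.symm (Fin.last j.length)) = c := by
          rw [List.get_eq_getElem]
          show (j ++ [c])[j.length] = c
          rw [List.getElem_append_right (le_refl j.length)]
          simp
        rw [ht, hg]
    rw [h2]
    ring

end AuxLemmas

/-- almost surely, for every node `i ∈ T` with `|i| ≤ l` and every
unit vector `u`,
`|⟨u,Y_l⟩| ≥ |⟨Π_i^* u, [Y_{l−|i|}]_i⟩| − ∑_{k=1}^{|i|} ‖Π_{i|_{k−1}}‖·|Z_{l,i|_k}|`. -/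
theorem inner_Y_lower_bound {d : ℕ} {Ω : Type} [MeasurableSpace Ω] (S : Setup d Ω) :
    ∀ l : ℕ, ∀ i : List ℕ, i.length ≤ l → ∀ u : Vec d, ‖u‖ = 1 →
      ∀ᵐ ω ∂S.P, memT S.Nn ω i →
        |⟪mv ((pathProd S.An i ω)ᵀ) u, S.Ysub i (l - i.length) ω⟫|
            - ∑ k : Fin i.length,
                opNorm (pathProd S.An (i.take (k : ℕ)) ω)
                  * ‖S.Zwbp l (i.take (k : ℕ)) (i.get k) ω‖
          ≤ |⟪u, S.Y l ω⟫| := by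
  intro l i hil u hu
  refine Filter.Eventually.of_forall (fun ω _ => ?_)
  have hE := S.inner_Y_eq l u ω i hil
  set A : ℝ := ⟪mv ((pathProd S.An i ω)ᵀ) u, S.Ysub i (l - i.length) ω⟫ with hA
  set B : Fin i.length → ℝ := fun k =>
    ⟪mv ((pathProd S.An (i.take (k : ℕ)) ω)ᵀ) u,
      S.Zwbp l (i.take (k : ℕ)) (i.get k) ω⟫ with hB
  have habs : ∀ k : Fin i.length,
      |B k| ≤ opNorm (pathProd S.An (i.take (k : ℕ)) ω)
        * ‖S.Zwbp l (i.take (k : ℕ)) (i.get k) ω‖ := by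
    intro k
    calc |B k| ≤ ‖mv ((pathProd S.An (i.take (k : ℕ)) ω)ᵀ) u‖
        * ‖S.Zwbp l (i.take (k : ℕ)) (i.get k) ω‖ := abs_real_inner_le_norm _ _
      _ ≤ (opNorm ((pathProd S.An (i.take (k : ℕ)) ω)ᵀ) * ‖u‖)
          * ‖S.Zwbp l (i.take (k : ℕ)) (i.get k) ω‖ :=
        mul_le_mul_of_nonneg_right (norm_mv_le _ _) (norm_nonneg _)
      _ = opNorm (pathProd S.An (i.take (k : ℕ)) ω)
          * ‖S.Zwbp l (i.take (k : ℕ)) (i.get k) ω‖ := by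
        rw [opNorm_transpose, hu, mul_one]
  have hsum : |∑ k : Fin i.length, B k|
      ≤ ∑ k : Fin i.length, opNorm (pathProd S.An (i.take (k : ℕ)) ω)
          * ‖S.Zwbp l (i.take (k : ℕ)) (i.get k) ω‖ :=
    (Finset.abs_sum_le_sum_abs _ _).trans (Finset.sum_le_sum fun k _ => habs k)
  have h2 : |A| ≤ |⟪u, S.Y l ω⟫| + |∑ k : Fin i.length, B k| := by
    rw [hE]
    have h3 := abs_add_le (A + ∑ k : Fin i.length, B k) (-(∑ k : Fin i.length, B k))
    simp only [add_neg_cancel_right, abs_neg] at h3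
    exact h3
  linarith

end
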